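/- Let f : ℝ^d → ℝ have L₃-Lipschitz third-order derivatives, let α > 0 and τ > 0 with τ ≤ √(α/(16L₃)), let ω ∈ (0, 1), and let y₀, y_{j−1}, y_j ∈ ℝ^d satisfy: f(y_{j−1}) ≤ f(y₀), f(y_j) ≤ f(y₀), f((y_j + y_{j−1})/2) ≥ f(y₀) − ατ², f(3y_{j−1} − 2y_j) ≥ f(y₀) − ατ², and ‖y_j − y_{j−1}‖ ≤ 2τ. Then the extrapolated point x = y_j + ω(y_j − y_{j−1}) satisfies f(x) ≤ f(y₀) + 14ατ². -/

import Mathlib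

set_option maxHeartbeats 1000000


lemma key_pos (u B : ℝ → ℝ) (hu : Differentiable ℝ u) (hB : Differentiable ℝ B)
    (h0 : u 0 = 0) (hB0 : B 0 = 0) (a : ℝ) (ha : 0 ≤ a)
    (hbound : ∀ t, 0 ≤ t → t ≤ a → |deriv u t| ≤ deriv B t) :
    |u a| ≤ B a := by
  have hmono : ∀ v : ℝ → ℝ, Differentiable ℝ v → (∀ t, 0 ≤ t → t ≤ a → 0 ≤ deriv v t) →
      v 0 ≤ v a := by
    intro v hv hd
    have := monotoneOn_of_deriv_nonneg (convex_Icc 0 a) hv.continuous.continuousOn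
      (fun t _ => (hv t).differentiableWithinAt)
      (fun t ht => by rw [interior_Icc] at ht; exact hd t ht.1.le ht.2.le)
    exact this (Set.left_mem_Icc.2 ha) (Set.right_mem_Icc.2 ha) ha
  have h1 : (B - u) 0 ≤ (B - u) a := by
    apply hmono _ (hB.sub hu)
    intro t ht1 ht2
    rw [deriv_sub (hB t) (hu t)]
    have := hbound t ht1 ht2
    have := abs_le.1 this
    linarith [this.2]
  have h2 : (B + u) 0 ≤ (B + u) a := by
    apply hmono _ (hB.add hu)
    intro t ht1 ht2
    rw [deriv_add (hB t) (hu t)]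
    have := abs_le.1 (hbound t ht1 ht2)
    linarith [this.1]
  simp only [Pi.sub_apply, Pi.add_apply, h0, hB0] at h1 h2
  rw [abs_le]
  constructor <;> linarith

lemma key_neg (u B : ℝ → ℝ) (hu : Differentiable ℝ u) (hB : Differentiable ℝ B)
    (h0 : u 0 = 0) (hB0 : B 0 = 0) (a : ℝ) (ha : a ≤ 0)
    (hbound : ∀ t, a ≤ t → t ≤ 0 → |deriv u t| ≤ -deriv B t) :
    |u a| ≤ B a := by
  have hanti : ∀ v : ℝ → ℝ, Differentiable ℝ v → (∀ t, a ≤ t → t ≤ 0 → deriv v t ≤ 0) →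
      v 0 ≤ v a := by
    intro v hv hd
    have := antitoneOn_of_deriv_nonpos (convex_Icc a 0) hv.continuous.continuousOn
      (fun t _ => (hv t).differentiableWithinAt)
      (fun t ht => by rw [interior_Icc] at ht; exact hd t ht.1.le ht.2.le)
    exact this (Set.left_mem_Icc.2 ha) (Set.right_mem_Icc.2 ha) ha
  have h1 : (B - u) 0 ≤ (B - u) a := by
    apply hanti _ (hB.sub hu)
    intro t ht1 ht2
    rw [deriv_sub (hB t) (hu t)]
    have := abs_le.1 (hbound t ht1 ht2)
    linarith [this.2]
  have h2 : (B + u) 0 ≤ (B + u) a := by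
    apply hanti _ (hB.add hu)
    intro t ht1 ht2
    rw [deriv_add (hB t) (hu t)]
    have := abs_le.1 (hbound t ht1 ht2)
    linarith [this.1]
  simp only [Pi.sub_apply, Pi.add_apply, h0, hB0] at h1 h2
  rw [abs_le]
  constructor <;> linarith

lemma taylor_err (g : ℝ → ℝ) (hg : ContDiff ℝ 3 g) (L : ℝ)
    (hlip : ∀ θ₁ θ₂ : ℝ, |iteratedDeriv 3 g θ₁ - iteratedDeriv 3 g θ₂| ≤ L * |θ₁ - θ₂|) :
    ∃ c₁ c₂ c₃ : ℝ, ∀ a : ℝ,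
      |g a - (g 0 + c₁ * a + c₂ * a ^ 2 + c₃ * a ^ 3)| ≤ L * a ^ 4 / 24 := by
  have hg' : ContDiff ℝ 2 (deriv g) := by
    have := (contDiff_succ_iff_deriv (n := 2)).mp (by norm_num at hg ⊢; exact hg)
    exact this.2.2
  have hg'' : ContDiff ℝ 1 (deriv (deriv g)) := by
    have := (contDiff_succ_iff_deriv (n := 1)).mp (by norm_num at hg' ⊢; exact hg')
    exact this.2.2
  have hdg : Differentiable ℝ g := hg.differentiable (by norm_num)
  have hdg' : Differentiable ℝ (deriv g) := hg'.differentiable (by norm_num)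
  have hdg'' : Differentiable ℝ (deriv (deriv g)) := hg''.differentiable (by norm_num)
  have hit : iteratedDeriv 3 g = deriv (deriv (deriv g)) := by
    simp [iteratedDeriv_succ, iteratedDeriv_zero]
  rw [hit] at hlip
  set c₃ := deriv (deriv (deriv g)) 0 with hc₃
  set c₂ := deriv (deriv g) 0 with hc₂
  set c₁ := deriv g 0 with hc₁
  -- level 3
  set u₃ : ℝ → ℝ := fun t => deriv (deriv g) t - c₂ - c₃ * t with hu₃
  have hu₃diff : Differentiable ℝ u₃ :=
    (hdg''.sub_const _).sub (differentiable_id.const_mul _)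
  have hu₃deriv : ∀ t, deriv u₃ t = deriv (deriv (deriv g)) t - c₃ := by
    intro t
    have h : HasDerivAt u₃ (deriv (deriv (deriv g)) t - c₃) t := by
      have h' := (((hdg'' t).hasDerivAt.sub_const c₂).sub ((hasDerivAt_id t).const_mul c₃))
      rw [mul_one] at h'
      exact h'
    exact h.deriv
  have hu₃bound : ∀ a : ℝ, |u₃ a| ≤ L * a ^ 2 / 2 := by
    intro a
    have hB : Differentiable ℝ (fun t : ℝ => L * t ^ 2 / 2) := by
      apply Differentiable.div_const; exact (differentiable_pow 2).const_mul L
    have hBd : ∀ t : ℝ, deriv (fun t : ℝ => L * t ^ 2 / 2) t = L * t := by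
      intro t
      have h : HasDerivAt (fun t : ℝ => L * t ^ 2 / 2) (L * (2 * t ^ 1) / 2) t :=
        (((hasDerivAt_pow 2 t)).const_mul L).div_const 2
      simpa using h.deriv.trans (by ring)
    have hb : ∀ t : ℝ, |deriv u₃ t| ≤ L * |t| := by
      intro t
      rw [hu₃deriv t]
      simpa using hlip t 0
    rcases le_or_gt 0 a with ha | ha
    · exact key_pos u₃ _ hu₃diff hB (by simp [hu₃, hc₂]) (by norm_num) a ha
        (fun t ht1 _ => by rw [hBd t]; simpa [abs_of_nonneg ht1] using hb t)
    · exact key_neg u₃ _ hu₃diff hB (by simp [hu₃, hc₂]) (by norm_num) a ha.le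
        (fun t _ ht2 => by rw [hBd t]; simpa [abs_of_nonpos ht2] using hb t)
  -- level 2
  set u₂ : ℝ → ℝ := fun t => deriv g t - c₁ - c₂ * t - c₃ * t ^ 2 / 2 with hu₂
  have hu₂diff : Differentiable ℝ u₂ := by
    apply Differentiable.sub
    apply Differentiable.sub
    exact hdg'.sub_const _
    exact differentiable_id.const_mul _
    exact ((differentiable_pow 2).const_mul _).div_const _
  have hu₂deriv : ∀ t, deriv u₂ t = u₃ t := by
    intro t
    have h : HasDerivAt u₂ (deriv (deriv g) t - c₂ * 1 - c₃ * (2 * t ^ 1) / 2) t := by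
      exact ((((hdg' t).hasDerivAt.sub_const _).sub ((hasDerivAt_id t).const_mul c₂)).sub
        (((hasDerivAt_pow 2 t).const_mul c₃).div_const 2))
    rw [h.deriv, hu₃]; ring
  have hu₂bound : ∀ a : ℝ, |u₂ a| ≤ L * |a| ^ 3 / 6 := by
    intro a
    rcases le_or_gt 0 a with ha | ha
    · rw [abs_of_nonneg ha]
      have hB : Differentiable ℝ (fun t : ℝ => L * t ^ 3 / 6) :=
        ((differentiable_pow 3).const_mul _).div_const _
      have hBd : ∀ t : ℝ, deriv (fun t : ℝ => L * t ^ 3 / 6) t = L * t ^ 2 / 2 := by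
        intro t
        have h : HasDerivAt (fun t : ℝ => L * t ^ 3 / 6) (L * (3 * t ^ 2) / 6) t :=
          (((hasDerivAt_pow 3 t)).const_mul L).div_const 6
        simpa using h.deriv.trans (by ring)
      exact key_pos u₂ _ hu₂diff hB (by simp [hu₂, hc₁]) (by norm_num) a ha
        (fun t ht1 _ => by rw [hBd t, hu₂deriv t]; exact hu₃bound t)
    · rw [abs_of_nonpos ha.le]
      have hB : Differentiable ℝ (fun t : ℝ => L * (-t) ^ 3 / 6) := by
        apply Differentiable.div_const
        apply Differentiable.const_mul
        exact (differentiable_id.neg).pow 3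
      have hBd : ∀ t : ℝ, deriv (fun t : ℝ => L * (-t) ^ 3 / 6) t = -(L * t ^ 2 / 2) := by
        intro t
        have h0 : HasDerivAt (fun t : ℝ => -t) (-1 : ℝ) t := (hasDerivAt_id t).neg
        have h : HasDerivAt (fun t : ℝ => L * (-t) ^ 3 / 6)
            (L * ((3 : ℕ) * (-t) ^ 2 * (-1)) / 6) t := by
          exact ((h0.pow 3).const_mul L).div_const 6
        refine h.deriv.trans ?_
        push_cast; ring
      have := key_neg u₂ _ hu₂diff hB (by simp [hu₂, hc₁]) (by norm_num) a ha.le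
        (fun t _ ht2 => by rw [hBd t, hu₂deriv t]; simpa using hu₃bound t)
      simpa using this
  -- level 1
  refine ⟨c₁, c₂ / 2, c₃ / 6, fun a => ?_⟩
  set u₁ : ℝ → ℝ := fun t => g t - (g 0 + c₁ * t + c₂ / 2 * t ^ 2 + c₃ / 6 * t ^ 3) with hu₁
  have hu₁diff : Differentiable ℝ u₁ := by
    apply hdg.sub
    apply Differentiable.add
    apply Differentiable.add
    apply Differentiable.add
    exact differentiable_const _
    exact differentiable_id.const_mul _
    exact (differentiable_pow 2).const_mul _
    exact (differentiable_pow 3).const_mul _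
  have hu₁deriv : ∀ t, deriv u₁ t = u₂ t := by
    intro t
    have h : HasDerivAt u₁
        (deriv g t - (0 + c₁ * 1 + c₂ / 2 * (2 * t ^ 1) + c₃ / 6 * (3 * t ^ 2))) t := by
      exact (hdg t).hasDerivAt.sub ((((hasDerivAt_const t (g 0)).add
        ((hasDerivAt_id t).const_mul c₁)).add ((hasDerivAt_pow 2 t).const_mul (c₂ / 2))).add
        ((hasDerivAt_pow 3 t).const_mul (c₃ / 6)))
    rw [h.deriv, hu₂]; ring
  have hfinal : |u₁ a| ≤ L * a ^ 4 / 24 := by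
    have hB : Differentiable ℝ (fun t : ℝ => L * t ^ 4 / 24) :=
      ((differentiable_pow 4).const_mul _).div_const _
    have hBd : ∀ t : ℝ, deriv (fun t : ℝ => L * t ^ 4 / 24) t = L * t ^ 3 / 6 := by
      intro t
      have h : HasDerivAt (fun t : ℝ => L * t ^ 4 / 24) (L * (4 * t ^ 3) / 24) t :=
        (((hasDerivAt_pow 4 t)).const_mul L).div_const 24
      simpa using h.deriv.trans (by ring)
    rcases le_or_gt 0 a with ha | ha
    · exact key_pos u₁ _ hu₁diff hB (by simp [hu₁]) (by norm_num) a ha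
        (fun t ht1 _ => by
          rw [hBd t, hu₁deriv t]
          calc |u₂ t| ≤ L * |t| ^ 3 / 6 := hu₂bound t
          _ = L * t ^ 3 / 6 := by rw [abs_of_nonneg ht1])
    · exact key_neg u₁ _ hu₁diff hB (by simp [hu₁]) (by norm_num) a ha.le
        (fun t _ ht2 => by
          rw [hBd t, hu₁deriv t]
          calc |u₂ t| ≤ L * |t| ^ 3 / 6 := hu₂bound t
          _ = -(L * t ^ 3 / 6) := by rw [abs_of_nonpos ht2]; ring)
  simpa [hu₁] using hfinal

/-- Bounding the function value at the extrapolated point x = y_j + ω(y_j − y_{j−1})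
via cubic interpolation under third-order smoothness. -/
theorem extrapolated_point_value_bound
    {d : ℕ} (f : EuclideanSpace ℝ (Fin d) → ℝ)
    (L₃ : ℝ) (hL₃ : 0 < L₃)
    (hdiff : ContDiff ℝ 3 f)
    (hlip : ∀ (x₀ δ : EuclideanSpace ℝ (Fin d)), ‖δ‖ = 1 → ∀ θ₁ θ₂ : ℝ,
      |iteratedDeriv 3 (fun θ : ℝ => f (x₀ + θ • δ)) θ₁ -
        iteratedDeriv 3 (fun θ : ℝ => f (x₀ + θ • δ)) θ₂| ≤ L₃ * |θ₁ - θ₂|)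
    (α τ : ℝ) (hα : 0 < α) (hτ : 0 < τ)
    (hτle : τ ≤ Real.sqrt (α / (16 * L₃)))
    (ω : ℝ) (hω : ω ∈ Set.Ioo (0 : ℝ) 1)
    (y₀ yjm yj : EuclideanSpace ℝ (Fin d))
    (h1 : f yjm ≤ f y₀) (h2 : f yj ≤ f y₀)
    (h3 : f ((1 / 2 : ℝ) • (yj + yjm)) ≥ f y₀ - α * τ ^ 2)
    (h4 : f ((3 : ℝ) • yjm - (2 : ℝ) • yj) ≥ f y₀ - α * τ ^ 2)
    (h5 : ‖yj - yjm‖ ≤ 2 * τ) :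
    f (yj + ω • (yj - yjm)) ≤ f y₀ + 14 * α * τ ^ 2 := by
  obtain ⟨hω0, hω1⟩ := hω
  have hA : 0 < α * τ ^ 2 := by positivity
  by_cases hv0 : yj - yjm = 0
  · rw [hv0]
    simp only [smul_zero, add_zero]
    linarith
  set r := ‖yj - yjm‖ with hrdef
  have hr : 0 < r := norm_pos_iff.2 hv0
  set δ : EuclideanSpace ℝ (Fin d) := r⁻¹ • (yj - yjm) with hδdef
  have hδ : ‖δ‖ = 1 := by
    rw [hδdef, norm_smul, norm_inv, norm_norm, ← hrdef, inv_mul_cancel₀ hr.ne']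
  set g : ℝ → ℝ := fun θ : ℝ => f (yj + θ • δ) with hgdef
  have hg : ContDiff ℝ 3 g := by
    apply hdiff.comp
    exact contDiff_const.add (contDiff_id.smul contDiff_const)
  obtain ⟨c₁, c₂, c₃, T⟩ := taylor_err g hg L₃ (hlip yj δ hδ)
  -- point evaluations
  have hpt : ∀ θ c : ℝ, θ * r⁻¹ = c → g θ = f (yj + c • (yj - yjm)) := by
    intro θ c hc
    rw [hgdef]
    simp only
    rw [hδdef, smul_smul, hc]
  have e0 : g 0 = f yj := by
    have := hpt 0 0 (by ring)
    simpa using this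
  have e1 : g (-r) = f yjm := by
    rw [hpt (-r) (-1) (by field_simp)]
    congr 1
    module
  have em : g (-(r/2)) = f ((1 / 2 : ℝ) • (yj + yjm)) := by
    rw [hpt (-(r/2)) (-(1/2)) (by field_simp)]
    congr 1
    module
  have e3 : g (-(3*r)) = f ((3 : ℝ) • yjm - (2 : ℝ) • yj) := by
    rw [hpt (-(3*r)) (-3) (by field_simp)]
    congr 1
    module
  have ew : g (ω*r) = f (yj + ω • (yj - yjm)) := by
    rw [hpt (ω*r) ω (by field_simp)]
  rw [e0] at T
  set F₀ := f y₀
  set A := α * τ ^ 2 with hAdef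
  set K := L₃ * r ^ 4 with hKdef
  have hK0 : 0 ≤ K := by positivity
  have hKA : K ≤ A := by
    have hτ2 : τ ^ 2 ≤ α / (16 * L₃) := by
      have h := Real.sq_sqrt (by positivity : (0:ℝ) ≤ α / (16 * L₃))
      nlinarith [Real.sqrt_nonneg (α / (16 * L₃))]
    have hr4 : r ^ 4 ≤ 16 * τ ^ 4 := by
      calc r ^ 4 ≤ (2*τ) ^ 4 := pow_le_pow_left₀ hr.le h5 4
        _ = 16 * τ ^ 4 := by ring
    have h16 : τ ^ 2 * (16 * L₃) ≤ α := by
      rw [← le_div_iff₀ (by positivity)]; exact hτ2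
    have hh1 : L₃ * r ^ 4 ≤ L₃ * (16 * τ ^ 4) := mul_le_mul_of_nonneg_left hr4 hL₃.le
    have hh2 : (τ ^ 2 * (16 * L₃)) * τ ^ 2 ≤ α * τ ^ 2 :=
      mul_le_mul_of_nonneg_right h16 (sq_nonneg τ)
    rw [hKdef, hAdef]
    linarith [hh1, hh2]
  -- Taylor instances
  have tw := abs_le.1 (T (ω*r))
  have t1 := abs_le.1 (T (-r))
  have tm := abs_le.1 (T (-(r/2)))
  have t3 := abs_le.1 (T (-(3*r)))
  rw [ew] at tw; rw [e1] at t1; rw [em] at tm; rw [e3] at t3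
  obtain ⟨l0, hl0def⟩ : ∃ x:ℝ, x = (ω+1/2)*(ω+1)*(ω+3)*(2/3) := ⟨_, rfl⟩
  obtain ⟨l1, hl1def⟩ : ∃ x:ℝ, x = -((8/5)*ω*(ω+1)*(ω+3)) := ⟨_, rfl⟩
  obtain ⟨l2, hl2def⟩ : ∃ x:ℝ, x = ω*(ω+1/2)*(ω+3) := ⟨_, rfl⟩
  obtain ⟨l3, hl3def⟩ : ∃ x:ℝ, x = -(ω*(ω+1/2)*(ω+1)/15) := ⟨_, rfl⟩
  have p0 : (0:ℝ) ≤ ω + 1/2 := add_nonneg hω0.le (by norm_num)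
  have p1 : (0:ℝ) ≤ ω + 1 := add_nonneg hω0.le (by norm_num)
  have p3 : (0:ℝ) ≤ ω + 3 := add_nonneg hω0.le (by norm_num)
  have hl0 : 0 ≤ l0 := by
    rw [hl0def]
    exact mul_nonneg (mul_nonneg (mul_nonneg p0 p1) p3) (by norm_num)
  have hl1 : l1 ≤ 0 := by
    rw [hl1def]
    exact neg_nonpos.2 (mul_nonneg (mul_nonneg
      (mul_nonneg (by norm_num) hω0.le) p1) p3)
  have hl2 : 0 ≤ l2 := by
    rw [hl2def]
    exact mul_nonneg (mul_nonneg hω0.le p0) p3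
  have hl3 : l3 ≤ 0 := by
    rw [hl3def]
    exact neg_nonpos.2 (div_nonneg (mul_nonneg (mul_nonneg hω0.le p0) p1) (by norm_num))
  -- abbreviations for cubic values
  obtain ⟨Pw, hPw⟩ : ∃ x:ℝ, x = f yj + c₁ * (ω*r) + c₂ * (ω*r) ^ 2 + c₃ * (ω*r) ^ 3 := ⟨_, rfl⟩
  obtain ⟨Pm, hPm⟩ : ∃ x:ℝ, x = f yj + c₁ * (-(r/2)) + c₂ * (-(r/2)) ^ 2 + c₃ * (-(r/2)) ^ 3 := ⟨_, rfl⟩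
  obtain ⟨P1, hP1⟩ : ∃ x:ℝ, x = f yj + c₁ * (-r) + c₂ * (-r) ^ 2 + c₃ * (-r) ^ 3 := ⟨_, rfl⟩
  obtain ⟨P3, hP3⟩ : ∃ x:ℝ, x = f yj + c₁ * (-(3*r)) + c₂ * (-(3*r)) ^ 2 + c₃ * (-(3*r)) ^ 3 := ⟨_, rfl⟩
  have hlag : Pw = l0 * (f yj) + l1 * Pm + l2 * P1 + l3 * P3 := by
    rw [hPw, hPm, hP1, hP3, hl0def, hl1def, hl2def, hl3def]; ring
  -- bounds on cubic values
  have hwr4 : L₃ * (ω*r) ^ 4 / 24 ≤ K / 24 := by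
    have hle : ω * r ≤ r := by
      linarith [mul_nonneg (by linarith : (0:ℝ) ≤ 1 - ω) hr.le]
    have h4' : (ω*r) ^ 4 ≤ r ^ 4 := pow_le_pow_left₀ (by positivity) hle 4
    have := mul_le_mul_of_nonneg_left h4' hL₃.le
    rw [hKdef]; linarith
  have bfx : f (yj + ω • (yj - yjm)) ≤ Pw + K / 24 := by
    have := tw.2
    linarith
  have bP1 : P1 ≤ F₀ + K / 24 := by
    have h := t1.1
    have hx : L₃ * (-r) ^ 4 / 24 = K / 24 := by rw [hKdef]; ring
    linarith
  have bPm : F₀ - A - K / 384 ≤ Pm := by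
    have h := tm.2
    have hx : L₃ * (-(r/2)) ^ 4 / 24 = K / 384 := by rw [hKdef]; ring
    linarith
  have bP3 : F₀ - A - 81 * K / 24 ≤ P3 := by
    have h := t3.2
    have hx : L₃ * (-(3*r)) ^ 4 / 24 = 81 * K / 24 := by rw [hKdef]; ring
    linarith
  -- combine
  have b0 : l0 * f yj ≤ l0 * F₀ := mul_le_mul_of_nonneg_left h2 hl0
  have b2 : l2 * P1 ≤ l2 * (F₀ + K / 24) := mul_le_mul_of_nonneg_left bP1 hl2
  have b1 : l1 * Pm ≤ l1 * (F₀ - A - K / 384) := mul_le_mul_of_nonpos_left bPm hl1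
  have b3 : l3 * P3 ≤ l3 * (F₀ - A - 81 * K / 24) := mul_le_mul_of_nonpos_left bP3 hl3
  have hiden : l0 * F₀ + l1 * (F₀ - A - K / 384) + l2 * (F₀ + K / 24)
      + l3 * (F₀ - A - 81 * K / 24) + K / 24
      = F₀ + (-l1 - l3) * A + (-l1/384 + l2/24 - 81*l3/24 + 1/24) * K := by
    rw [hl0def, hl1def, hl2def, hl3def]; ring
  have hc2 : 0 ≤ -l1/384 + l2/24 - 81*l3/24 + 1/24 := by linarith
  have hcK : (-l1/384 + l2/24 - 81*l3/24 + 1/24) * K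
      ≤ (-l1/384 + l2/24 - 81*l3/24 + 1/24) * A := mul_le_mul_of_nonneg_left hKA hc2
  have hq : (-l1 - l3) + (-l1/384 + l2/24 - 81*l3/24 + 1/24) ≤ 14 := by
    have hfac : 14 - ((-l1 - l3) + (-l1/384 + l2/24 - 81*l3/24 + 1/24))
        = (1 - ω) * (335/24 + 143/16*ω + 31/16*ω^2) := by
      rw [hl1def, hl2def, hl3def]; ring
    linarith [hfac, mul_nonneg (by linarith : (0:ℝ) ≤ 1 - ω)
      (by linarith [sq_nonneg ω] : (0:ℝ) ≤ 335/24 + 143/16*ω + 31/16*ω^2)]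
  have hfin : (-l1 - l3) * A + (-l1/384 + l2/24 - 81*l3/24 + 1/24) * A ≤ 14 * A := by
    have := mul_le_mul_of_nonneg_right hq hA.le
    linarith [this]
  have : f (yj + ω • (yj - yjm)) ≤ F₀ + 14 * A := by
    linarith [bfx, hlag, b0, b1, b2, b3, hiden, hcK, hfin]
  calc f (yj + ω • (yj - yjm)) ≤ F₀ + 14 * A := this
    _ = f y₀ + 14 * α * τ ^ 2 := by rw [hAdef]; ring
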